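/- Backdoor adjustment for a confounded pair: let U be a finite random variable, Z = h(U) an observed confounder, X = f_X(Z, E_X) with E_X ⫫ U, and Y = f_Y(X, U, E_Y) with E_Y ⫫ (U, E_X). Then for any x and y, P(Y = y | do(X = x)) := P(f_Y(x, U, E_Y) = y) equals sum over z of P(Z = z) · P(Y = y | X = x, Z = z), provided P(X = x, Z = z) > 0 for all z with P(Z = z) > 0. -/

import Mathlib

open Finset

/-- Backdoor adjustment for a confounded pair: with `Z = h(U)`,
`X = fX(Z, E_X)`, `Y = fY(X, U, E_Y)` and `U, E_X, E_Y` mutually independent,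
`P(Y = y | do(X = x)) = ∑ z, P(Z = z) · P(Y = y | X = x, Z = z)`,
provided `P(X = x, Z = z) > 0` for all `z` with `P(Z = z) > 0`. -/
theorem stmt_5
    {ΩU ΩEX ΩEY 𝒳 𝒵 𝒴 : Type*} [Fintype ΩU] [Fintype ΩEX] [Fintype ΩEY] [Fintype 𝒵]
    [DecidableEq 𝒳] [DecidableEq 𝒵] [DecidableEq 𝒴]
    (pU : ΩU → ℝ) (pEX : ΩEX → ℝ) (pEY : ΩEY → ℝ)
    (h : ΩU → 𝒵) (fX : 𝒵 → ΩEX → 𝒳) (fY : 𝒳 → ΩU → ΩEY → 𝒴)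
    (hpU0 : ∀ u, 0 ≤ pU u) (hpU1 : ∑ u, pU u = 1)
    (hpEX0 : ∀ e, 0 ≤ pEX e) (hpEX1 : ∑ e, pEX e = 1)
    (hpEY0 : ∀ e, 0 ≤ pEY e) (hpEY1 : ∑ e, pEY e = 1)
    (x : 𝒳) (y : 𝒴)
    (Pz : 𝒵 → ℝ)
    (hPz : ∀ z, Pz z = ∑ u, ∑ ex, ∑ ey, pU u * pEX ex * pEY ey *
      (if h u = z then (1 : ℝ) else 0))
    (Pxz : 𝒳 → 𝒵 → ℝ)
    (hPxz : ∀ x' z, Pxz x' z = ∑ u, ∑ ex, ∑ ey, pU u * pEX ex * pEY ey *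
      (if fX (h u) ex = x' ∧ h u = z then (1 : ℝ) else 0))
    (Pyxz : 𝒴 → 𝒳 → 𝒵 → ℝ)
    (hPyxz : ∀ y' x' z, Pyxz y' x' z = ∑ u, ∑ ex, ∑ ey, pU u * pEX ex * pEY ey *
      (if fX (h u) ex = x' ∧ h u = z ∧ fY (fX (h u) ex) u ey = y'
        then (1 : ℝ) else 0))
    (hpos : ∀ z, 0 < Pz z → 0 < Pxz x z) :
    (∑ u, ∑ ey, pU u * pEY ey * (if fY x u ey = y then (1 : ℝ) else 0)) =
      ∑ z, Pz z * (Pyxz y x z / Pxz x z) := by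

  classical
  set A : 𝒵 → ℝ := fun z => ∑ u, pU u * (if h u = z then (1:ℝ) else 0) with hA
  set B : 𝒵 → ℝ := fun z => ∑ u, ∑ ey, pU u * pEY ey *
    (if h u = z ∧ fY x u ey = y then (1:ℝ) else 0) with hB
  set C : 𝒵 → ℝ := fun z => ∑ ex, pEX ex * (if fX z ex = x then (1:ℝ) else 0) with hC
  have key2 : ∀ (m : ΩU → ΩEY → ℝ) (g : ΩEX → ℝ),
      (∑ u, ∑ ex, ∑ ey, pU u * pEX ex * pEY ey * (m u ey * g ex))
        = (∑ u, ∑ ey, pU u * pEY ey * m u ey) * (∑ ex, pEX ex * g ex) := by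
    intro m g
    have h1 : ∀ u ex, (∑ ey, pU u * pEX ex * pEY ey * (m u ey * g ex))
        = (pEX ex * g ex) * ∑ ey, pU u * pEY ey * m u ey := by
      intro u ex
      rw [Finset.mul_sum]
      exact Finset.sum_congr rfl fun ey _ => by ring
    simp only [h1]
    simp only [← Finset.sum_mul]
    rw [← Finset.mul_sum, mul_comm]
  have key3 : ∀ (f : ΩU → ℝ), (∑ u, ∑ ey, pU u * pEY ey * f u) = ∑ u, pU u * f u := by
    intro f
    refine Finset.sum_congr rfl fun u _ => ?_
    have : (∑ ey, pU u * pEY ey * f u) = (pU u * f u) * ∑ ey, pEY ey := by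
      rw [Finset.mul_sum]; exact Finset.sum_congr rfl fun ey _ => by ring
    rw [this, hpEY1, mul_one]
  have hPzA : ∀ z, Pz z = A z := by
    intro z
    rw [hPz]
    have : (∑ u, ∑ ex, ∑ ey, pU u * pEX ex * pEY ey * (if h u = z then (1:ℝ) else 0))
        = ∑ u, ∑ ex, ∑ ey, pU u * pEX ex * pEY ey *
          ((if h u = z then (1:ℝ) else 0) * (1:ℝ)) := by
      refine Finset.sum_congr rfl fun u _ => Finset.sum_congr rfl fun ex _ =>
        Finset.sum_congr rfl fun ey _ => by ring
    rw [this, key2 (fun u _ => if h u = z then (1:ℝ) else 0) (fun _ => 1)]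
    simp only [mul_one, hpEX1, key3]
    rfl
  have hPxzAC : Pxz x = fun z => A z * C z := by
    funext z
    rw [hPxz]
    have : (∑ u, ∑ ex, ∑ ey, pU u * pEX ex * pEY ey *
          (if fX (h u) ex = x ∧ h u = z then (1:ℝ) else 0))
        = ∑ u, ∑ ex, ∑ ey, pU u * pEX ex * pEY ey *
          ((if h u = z then (1:ℝ) else 0) * (if fX z ex = x then (1:ℝ) else 0)) := by
      refine Finset.sum_congr rfl fun u _ => Finset.sum_congr rfl fun ex _ =>
        Finset.sum_congr rfl fun ey _ => ?_
      by_cases hz : h u = z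
      · subst hz; simp
      · simp [hz]
    rw [this, key2 (fun u _ => if h u = z then (1:ℝ) else 0)
      (fun ex => if fX z ex = x then (1:ℝ) else 0), key3]
  have hPyxzBC : Pyxz y x = fun z => B z * C z := by
    funext z
    rw [hPyxz]
    have : (∑ u, ∑ ex, ∑ ey, pU u * pEX ex * pEY ey *
          (if fX (h u) ex = x ∧ h u = z ∧ fY (fX (h u) ex) u ey = y then (1:ℝ) else 0))
        = ∑ u, ∑ ex, ∑ ey, pU u * pEX ex * pEY ey *
          ((if h u = z ∧ fY x u ey = y then (1:ℝ) else 0) *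
            (if fX z ex = x then (1:ℝ) else 0)) := by
      refine Finset.sum_congr rfl fun u _ => Finset.sum_congr rfl fun ex _ =>
        Finset.sum_congr rfl fun ey _ => ?_
      by_cases hz : h u = z
      · subst hz
        by_cases hx : fX (h u) ex = x
        · rw [hx]; simp [hx]
        · simp [hx]
      · simp [hz]
    rw [this, key2 (fun u ey => if h u = z ∧ fY x u ey = y then (1:ℝ) else 0)
      (fun ex => if fX z ex = x then (1:ℝ) else 0)]
  have hLHS : (∑ z, B z)
      = ∑ u, ∑ ey, pU u * pEY ey * (if fY x u ey = y then (1:ℝ) else 0) := by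
    simp only [hB]
    rw [Finset.sum_comm]
    refine Finset.sum_congr rfl fun u _ => ?_
    rw [Finset.sum_comm]
    refine Finset.sum_congr rfl fun ey _ => ?_
    rw [← Finset.mul_sum]
    congr 1
    by_cases hP : fY x u ey = y
    · simp [hP]
    · simp [hP]
  have hAnn : ∀ z, 0 ≤ A z := by
    intro z
    refine Finset.sum_nonneg fun u _ => mul_nonneg (hpU0 u) ?_
    split <;> norm_num
  rw [← hLHS]
  simp only [hPzA, hPxzAC, hPyxzBC]
  refine Finset.sum_congr rfl fun z _ => ?_
  by_cases hAz : A z = 0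
  · have hB0 : B z = 0 := by
      have h0 : ∀ u ∈ Finset.univ, pU u * (if h u = z then (1:ℝ) else 0) = 0 := by
        rw [← Finset.sum_eq_zero_iff_of_nonneg
          (fun u _ => mul_nonneg (hpU0 u) (by split <;> norm_num))]
        exact hAz
      rw [hB]
      refine Finset.sum_eq_zero fun u _ => Finset.sum_eq_zero fun ey _ => ?_
      by_cases hz : h u = z
      · have : pU u = 0 := by simpa [hz] using h0 u (Finset.mem_univ u)
        simp [this]
      · simp [hz]
    simp [hAz, hB0]
  · have hApos : 0 < A z := lt_of_le_of_ne (hAnn z) (Ne.symm hAz)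
    have hACpos : 0 < A z * C z := by
      have := hpos z (by rw [hPzA]; exact hApos)
      rwa [hPxzAC] at this
    have hCpos : 0 < C z := by nlinarith
    rw [mul_div_mul_right _ _ (ne_of_gt hCpos)]
    field_simp
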